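/- Let H₀ be a Hermitian d×d complex matrix with largest eigenvalue E_max and smallest eigenvalue E_min, and define the commutator superoperator L(A) = −i·(H₀·A − A·H₀) on d×d complex matrices. Then the operator norm of L with respect to the trace norm equals the spectral diameter of H₀: sup over A ≠ 0 of ‖L(A)‖₁ / ‖A‖₁ = E_max − E_min, where ‖A‖₁ = Tr√(AᴴA). -/

import Mathlib

set_option maxHeartbeats 1000000

open Matrix
open scoped ComplexOrder

/-- Trace norm (Schatten 1-norm): `‖A‖₁ = Tr √(Aᴴ A)`. -/
noncomputable def traceNorm {d : ℕ} (A : Matrix (Fin d) (Fin d) ℂ) : ℝ :=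
  (((Matrix.posSemidef_conjTranspose_mul_self A).1.eigenvectorUnitary.1 *
      diagonal (((↑) : ℝ → ℂ) ∘ Real.sqrt ∘ (Matrix.posSemidef_conjTranspose_mul_self A).1.eigenvalues) *
      (star (Matrix.posSemidef_conjTranspose_mul_self A).1.eigenvectorUnitary :
        Matrix (Fin d) (Fin d) ℂ)).trace).re

namespace CommNorm

variable {d : ℕ}

/-- Euclidean norm of a complex vector. -/
noncomputable def en (x : Fin d → ℂ) : ℝ := Real.sqrt (∑ i, Complex.normSq (x i))

lemma en_nonneg (x : Fin d → ℂ) : 0 ≤ en x := Real.sqrt_nonneg _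

lemma dot_self_eq (x : Fin d → ℂ) :
    star x ⬝ᵥ x = ((∑ i, Complex.normSq (x i) : ℝ) : ℂ) := by
  simp [dotProduct, Complex.normSq_eq_conj_mul_self]

lemma dot_rearrange (B : Matrix (Fin d) (Fin d) ℂ) (x y : Fin d → ℂ) :
    star x ⬝ᵥ (B *ᵥ y) = star (Bᴴ *ᵥ x) ⬝ᵥ y := by
  rw [Matrix.dotProduct_mulVec, Matrix.star_mulVec, Matrix.conjTranspose_conjTranspose]

lemma en_mulVec_isometry {W : Matrix (Fin d) (Fin d) ℂ} (hW : Wᴴ * W = 1) (x : Fin d → ℂ) :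
    ∑ i, Complex.normSq ((W *ᵥ x) i) = ∑ i, Complex.normSq (x i) := by
  have h : star (W *ᵥ x) ⬝ᵥ (W *ᵥ x) = star x ⬝ᵥ x := by
    rw [dot_rearrange, Matrix.mulVec_mulVec, hW, Matrix.one_mulVec]
  rw [dot_self_eq, dot_self_eq] at h
  exact_mod_cast h

lemma traceNorm_eq_sum (M : Matrix (Fin d) (Fin d) ℂ) :
    traceNorm M =
      ∑ i, Real.sqrt ((Matrix.posSemidef_conjTranspose_mul_self M).1.eigenvalues i) := by
  set hps := Matrix.posSemidef_conjTranspose_mul_self M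
  have hVV : star (hps.1.eigenvectorUnitary : Matrix (Fin d) (Fin d) ℂ) *
      (hps.1.eigenvectorUnitary : Matrix (Fin d) (Fin d) ℂ) = 1 :=
    (Matrix.mem_unitaryGroup_iff').mp hps.1.eigenvectorUnitary.2
  rw [traceNorm, Matrix.trace_mul_comm, ← Matrix.mul_assoc, hVV, one_mul, Matrix.trace_diagonal,
    Complex.re_sum]
  simp

/-- trace of X as sum over orthonormal columns of a matrix V with V Vᴴ = 1. -/
lemma trace_eq_sum_cols (X V : Matrix (Fin d) (Fin d) ℂ) (hV : V * star V = 1) :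
    X.trace = ∑ j, star (fun k => V k j) ⬝ᵥ (X *ᵥ fun k => V k j) := by
  have h : X.trace = (star V * (X * V)).trace := by
    rw [← Matrix.mul_assoc, Matrix.trace_mul_comm, ← Matrix.mul_assoc, hV, one_mul]
  rw [h, Matrix.trace]
  refine Finset.sum_congr rfl fun j _ => ?_
  simp only [Matrix.diag, Matrix.mul_apply, Matrix.star_apply, dotProduct, Matrix.mulVec,
    dotProduct, Pi.star_apply, Finset.mul_sum]

/-- Master inequality: if `C` is bounded as a bilinear form by `κ`, then
`Re Tr (C M) ≤ κ ‖M‖₁`. -/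
lemma re_trace_le (M C : Matrix (Fin d) (Fin d) ℂ) (κ : ℝ)
    (hC : ∀ x y : Fin d → ℂ, ‖star x ⬝ᵥ (C *ᵥ y)‖ ≤ κ * (en x * en y)) :
    ((C * M).trace).re ≤ κ * traceNorm M := by
  set hps := Matrix.posSemidef_conjTranspose_mul_self M with hps_def
  set V : Matrix (Fin d) (Fin d) ℂ := (hps.1.eigenvectorUnitary : Matrix (Fin d) (Fin d) ℂ) with hV_def
  have hVV : V * star V = 1 := (Matrix.mem_unitaryGroup_iff).mp hps.1.eigenvectorUnitary.2
  have hVV' : star V * V = 1 := (Matrix.mem_unitaryGroup_iff').mp hps.1.eigenvectorUnitary.2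
  set v : Fin d → Fin d → ℂ := fun j k => V k j with hv_def
  have hv_eq : ∀ j, v j = ⇑(hps.1.eigenvectorBasis j) := by
    intro j; funext k
    exact Matrix.IsHermitian.eigenvectorUnitary_apply hps.1 k j
  have hdot : ∀ j, star (v j) ⬝ᵥ v j = 1 := by
    intro j
    have := congrFun (congrFun hVV' j) j
    simpa [Matrix.mul_apply, Matrix.one_apply, dotProduct, Matrix.star_apply,
      Pi.star_apply] using this
  have hnorm : ∀ j, en (v j) = 1 := by
    intro j
    have h := hdot j
    rw [dot_self_eq] at h
    have : (∑ i, Complex.normSq (v j i)) = 1 := by exact_mod_cast h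
    rw [en, this, Real.sqrt_one]
  have hMv : ∀ j, en (M *ᵥ v j) = Real.sqrt (hps.1.eigenvalues j) := by
    intro j
    have heig : (Mᴴ * M) *ᵥ v j = (hps.1.eigenvalues j : ℝ) • v j := by
      rw [hv_eq j]; exact hps.1.mulVec_eigenvectorBasis j
    have h1 : star (M *ᵥ v j) ⬝ᵥ (M *ᵥ v j) = ((hps.1.eigenvalues j : ℝ) : ℂ) := by
      have h2 := dot_rearrange Mᴴ (v j) (M *ᵥ v j)
      rw [Matrix.conjTranspose_conjTranspose] at h2
      rw [← h2, Matrix.mulVec_mulVec, heig, dotProduct_smul, hdot j]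
      simp [Complex.real_smul]
    rw [dot_self_eq] at h1
    have : (∑ i, Complex.normSq ((M *ᵥ v j) i)) = hps.1.eigenvalues j := by exact_mod_cast h1
    rw [en, this]
  have htr : (C * M).trace = ∑ j, star (v j) ⬝ᵥ (C *ᵥ (M *ᵥ v j)) := by
    rw [trace_eq_sum_cols (C * M) V hVV]
    exact Finset.sum_congr rfl fun j _ => by rw [Matrix.mulVec_mulVec]
  calc ((C * M).trace).re ≤ ‖(C * M).trace‖ := Complex.re_le_norm _
    _ ≤ ∑ j, ‖star (v j) ⬝ᵥ (C *ᵥ (M *ᵥ v j))‖ := by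
        rw [htr]; exact norm_sum_le _ _
    _ ≤ ∑ j, κ * (en (v j) * en (M *ᵥ v j)) :=
        Finset.sum_le_sum fun j _ => hC _ _
    _ = κ * traceNorm M := by
        rw [traceNorm_eq_sum, Finset.mul_sum]
        exact Finset.sum_congr rfl fun j _ => by rw [hnorm j, hMv j, one_mul]



lemma herm_idem_dot (Q : Matrix (Fin d) (Fin d) ℂ) (hQ : Qᴴ = Q) (hQ2 : Q * Q = Q)
    (y : Fin d → ℂ) :
    star y ⬝ᵥ (Q *ᵥ y) = ((∑ i, Complex.normSq ((Q *ᵥ y) i) : ℝ) : ℂ) := by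
  conv_lhs => rw [← hQ2, ← Matrix.mulVec_mulVec, dot_rearrange, hQ]
  exact dot_self_eq _

lemma herm_idem_re_nonneg (Q : Matrix (Fin d) (Fin d) ℂ) (hQ : Qᴴ = Q) (hQ2 : Q * Q = Q)
    (y : Fin d → ℂ) : 0 ≤ (star y ⬝ᵥ (Q *ᵥ y)).re := by
  rw [herm_idem_dot Q hQ hQ2 y]
  simpa using Finset.sum_nonneg fun i _ => Complex.normSq_nonneg _

/-- Projection bound: if `Pᴴ = P` and `P * P = P` then `Re ⟨y, P y⟩ ≤ ‖y‖²`. -/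
lemma proj_quad_le (P : Matrix (Fin d) (Fin d) ℂ) (hP : Pᴴ = P) (hP2 : P * P = P)
    (y : Fin d → ℂ) :
    (star y ⬝ᵥ (P *ᵥ y)).re ≤ ∑ i, Complex.normSq (y i) := by
  have hQ : (1 - P)ᴴ = 1 - P := by
    rw [Matrix.conjTranspose_sub, Matrix.conjTranspose_one, hP]
  have hQ2 : (1 - P) * (1 - P) = 1 - P := by
    rw [Matrix.sub_mul, Matrix.mul_sub, Matrix.mul_sub, Matrix.one_mul, Matrix.one_mul,
      Matrix.mul_one, hP2]
    abel
  have hsplit : star y ⬝ᵥ y = star y ⬝ᵥ (P *ᵥ y) + star y ⬝ᵥ ((1 - P) *ᵥ y) := by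
    rw [Matrix.sub_mulVec, Matrix.one_mulVec, dotProduct_sub]
    ring
  have h0 := herm_idem_re_nonneg (1 - P) hQ hQ2 y
  have h1 : (star y ⬝ᵥ y).re = ∑ i, Complex.normSq (y i) := by
    rw [dot_self_eq]; simp
  have := congrArg Complex.re hsplit
  rw [Complex.add_re, h1] at this
  linarith

/-- Duality attainment: there is a contraction `C` with `Re Tr (C M) = ‖M‖₁`. -/
lemma exists_dual (M : Matrix (Fin d) (Fin d) ℂ) :
    ∃ C : Matrix (Fin d) (Fin d) ℂ,
      (∀ x y : Fin d → ℂ, ‖star x ⬝ᵥ (C *ᵥ y)‖ ≤ en x * en y) ∧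
      ((C * M).trace).re = traceNorm M := by
  set hps := Matrix.posSemidef_conjTranspose_mul_self M with hps_def
  set V : Matrix (Fin d) (Fin d) ℂ := (hps.1.eigenvectorUnitary : Matrix (Fin d) (Fin d) ℂ)
    with hV_def
  have hVV : V * star V = 1 := (Matrix.mem_unitaryGroup_iff).mp hps.1.eigenvectorUnitary.2
  have hVV' : star V * V = 1 := (Matrix.mem_unitaryGroup_iff').mp hps.1.eigenvectorUnitary.2
  set lam : Fin d → ℝ := hps.1.eigenvalues with hlam_def
  have hlam0 : ∀ i, 0 ≤ lam i := fun i => hps.eigenvalues_nonneg i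
  set g : Fin d → ℝ := fun i => if lam i = 0 then 0 else (Real.sqrt (lam i))⁻¹ with hg_def
  have hg0 : ∀ i, 0 ≤ g i := by
    intro i
    simp only [hg_def]
    split
    · exact le_refl 0
    · exact inv_nonneg.2 (Real.sqrt_nonneg _)
  set Dg : Matrix (Fin d) (Fin d) ℂ := Matrix.diagonal (fun i => (g i : ℂ)) with hDg_def
  set Dl : Matrix (Fin d) (Fin d) ℂ := Matrix.diagonal (fun i => (lam i : ℂ)) with hDl_def
  have hspec : Mᴴ * M = V * Dl * star V := by
    have h := hps.1.spectral_theorem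
    exact h
  set C : Matrix (Fin d) (Fin d) ℂ := V * Dg * star V * Mᴴ with hC_def
  -- trace identity
  have hCM : C * M = V * (Dg * Dl) * star V := by
    have h1 : C * M = V * (Dg * (star V * (Mᴴ * M))) := by
      rw [hC_def]; simp only [Matrix.mul_assoc]
    have h2 : star V * (Mᴴ * M) = Dl * star V := by
      rw [hspec, ← Matrix.mul_assoc, ← Matrix.mul_assoc, hVV', one_mul]
    rw [h1, h2]; simp only [Matrix.mul_assoc]
  have htrace : ((C * M).trace).re = traceNorm M := by
    have h3 : (C * M).trace = (Dg * Dl).trace := by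
      rw [hCM, Matrix.trace_mul_comm, ← Matrix.mul_assoc, hVV', one_mul]
    rw [h3, hDg_def, hDl_def, Matrix.diagonal_mul_diagonal, Matrix.trace_diagonal,
      traceNorm_eq_sum, Complex.re_sum]
    refine Finset.sum_congr rfl fun i _ => ?_
    have : ((g i : ℂ) * (lam i : ℂ)).re = g i * lam i := by
      rw [← Complex.ofReal_mul, Complex.ofReal_re]
    rw [this]
    have he : (Matrix.posSemidef_conjTranspose_mul_self M).1.eigenvalues i = lam i := rfl
    rw [he, hg_def]
    simp only
    split
    · rename_i h
      simp [h]
    · rename_i h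
      have hsq : Real.sqrt (lam i) * Real.sqrt (lam i) = lam i := Real.mul_self_sqrt (hlam0 i)
      have hsne : Real.sqrt (lam i) ≠ 0 := by
        intro h0
        exact h (by rw [← hsq, h0, mul_zero])
      field_simp
      exact (Real.sq_sqrt (hlam0 i)).symm
  refine ⟨C, fun x y => ?_, htrace⟩
  set u : Fin d → ℂ := star V *ᵥ x with hu_def
  set b : Fin d → ℂ := (star V * Mᴴ) *ᵥ y with hb_def
  have hVh : Vᴴ = star V := (Matrix.star_eq_conjTranspose V).symm
  have hsVh : (star V)ᴴ = V := by rw [← Matrix.star_eq_conjTranspose, star_star]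
  have hCy : C *ᵥ y = V *ᵥ (Dg *ᵥ b) := by
    have hC2 : C = (V * Dg) * (star V * Mᴴ) := by
      rw [hC_def]; simp only [Matrix.mul_assoc]
    rw [hC2, hb_def, Matrix.mulVec_mulVec, Matrix.mulVec_mulVec]
  have hterm : star x ⬝ᵥ (C *ᵥ y) = ∑ i, star (u i) * ((g i : ℂ) * b i) := by
    rw [hCy, dot_rearrange, hVh, ← hu_def, hDg_def]
    simp [dotProduct, Matrix.mulVec_diagonal]
  have habs : ‖star x ⬝ᵥ (C *ᵥ y)‖ ≤
      ∑ i, ‖u i‖ * (g i * ‖b i‖) := by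
    rw [hterm]
    refine (norm_sum_le _ _).trans (le_of_eq (Finset.sum_congr rfl fun i _ => ?_))
    rw [norm_mul, norm_mul]
    simp [Complex.norm_real, abs_of_nonneg (hg0 i)]
  have hCS : (∑ i, ‖u i‖ * (g i * ‖b i‖)) ≤
      Real.sqrt (∑ i, Complex.normSq (u i)) *
        Real.sqrt (∑ i, g i ^ 2 * Complex.normSq (b i)) := by
    have h := Finset.sum_mul_sq_le_sq_mul_sq Finset.univ
      (fun i => ‖u i‖) (fun i => g i * ‖b i‖)
    have hnn : 0 ≤ ∑ i, ‖u i‖ * (g i * ‖b i‖) :=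
      Finset.sum_nonneg fun i _ =>
        mul_nonneg (norm_nonneg _) (mul_nonneg (hg0 i) (norm_nonneg _))
    have h1 : ∑ i, (‖u i‖) ^ 2 = ∑ i, Complex.normSq (u i) := by
      simp [Complex.sq_norm]
    have h2 : ∑ i, (g i * ‖b i‖) ^ 2 = ∑ i, g i ^ 2 * Complex.normSq (b i) := by
      simp [mul_pow, Complex.sq_norm]
    calc (∑ i, ‖u i‖ * (g i * ‖b i‖))
        = Real.sqrt ((∑ i, ‖u i‖ * (g i * ‖b i‖)) ^ 2) :=
          (Real.sqrt_sq hnn).symm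
      _ ≤ Real.sqrt ((∑ i, (‖u i‖) ^ 2) * ∑ i, (g i * ‖b i‖) ^ 2) :=
          Real.sqrt_le_sqrt h
      _ = _ := by
          rw [Real.sqrt_mul (Finset.sum_nonneg fun i _ => sq_nonneg _), h1, h2]
  have hu2 : ∑ i, Complex.normSq (u i) = ∑ i, Complex.normSq (x i) := by
    rw [hu_def]
    exact en_mulVec_isometry (by rw [hsVh]; exact hVV) x
  set Dg2 : Matrix (Fin d) (Fin d) ℂ := Matrix.diagonal (fun i => ((g i ^ 2 : ℝ) : ℂ))
    with hDg2_def
  set P : Matrix (Fin d) (Fin d) ℂ := M * (V * Dg2 * star V) * Mᴴ with hP_def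
  have hDg2h : Dg2ᴴ = Dg2 := by
    have hfun : (star fun i => ((g i ^ 2 : ℝ) : ℂ)) = fun i => ((g i ^ 2 : ℝ) : ℂ) := by
      funext i
      simp [Complex.conj_ofReal]
    rw [hDg2_def, Matrix.diagonal_conjTranspose, hfun]
  have hPh : Pᴴ = P := by
    rw [hP_def]
    simp only [Matrix.conjTranspose_mul, Matrix.conjTranspose_conjTranspose, hDg2h, hsVh, hVh,
      Matrix.mul_assoc]
  have hMM : ∀ W : Matrix (Fin d) (Fin d) ℂ,
      Mᴴ * (M * W) = V * (Dl * (star V * W)) := by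
    intro W
    rw [← Matrix.mul_assoc, hspec]
    simp only [Matrix.mul_assoc]
  have hcol : ∀ Z : Matrix (Fin d) (Fin d) ℂ, star V * (V * Z) = Z := fun Z => by
    rw [← Matrix.mul_assoc, hVV', one_mul]
  have hDD : Dg2 * Dl * Dg2 = Dg2 := by
    have hreal : ∀ i, g i ^ 2 * lam i * g i ^ 2 = g i ^ 2 := by
      intro i
      by_cases h : lam i = 0
      · simp [hg_def, h]
      · have hgi : g i = (Real.sqrt (lam i))⁻¹ := by simp [hg_def, h]
        have hs : Real.sqrt (lam i) ^ 2 = lam i := Real.sq_sqrt (hlam0 i)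
        rw [hgi, inv_pow, hs]
        field_simp
    have hfun : (fun i => ((g i ^ 2 : ℝ) : ℂ) * ((lam i : ℝ) : ℂ) * ((g i ^ 2 : ℝ) : ℂ))
        = fun i => ((g i ^ 2 : ℝ) : ℂ) := by
      funext i
      rw [← Complex.ofReal_mul, ← Complex.ofReal_mul, hreal i]
    rw [hDg2_def, hDl_def, Matrix.diagonal_mul_diagonal, Matrix.diagonal_mul_diagonal, hfun]
  have hDcol : ∀ W : Matrix (Fin d) (Fin d) ℂ,
      Dg2 * (Dl * (Dg2 * W)) = Dg2 * W := by
    intro W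
    rw [← Matrix.mul_assoc Dl Dg2, ← Matrix.mul_assoc Dg2 (Dl * Dg2),
      ← Matrix.mul_assoc Dg2 Dl, hDD]
  have hP2 : P * P = P := by
    rw [hP_def]
    simp only [Matrix.mul_assoc]
    rw [hMM (V * (Dg2 * (star V * Mᴴ))), hcol, hcol, hDcol]
  have hbP : star y ⬝ᵥ (P *ᵥ y) = ((∑ i, g i ^ 2 * Complex.normSq (b i) : ℝ) : ℂ) := by
    have hPy : P *ᵥ y = (M * (V * Dg2)) *ᵥ b := by
      have hPalt : P = (M * (V * Dg2)) * (star V * Mᴴ) := by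
        rw [hP_def]; simp only [Matrix.mul_assoc]
      rw [hPalt, hb_def, Matrix.mulVec_mulVec]
    have hadj : (M * (V * Dg2))ᴴ *ᵥ y = Dg2 *ᵥ b := by
      have hadj2 : (M * (V * Dg2))ᴴ = Dg2 * (star V * Mᴴ) := by
        simp only [Matrix.conjTranspose_mul, hDg2h, hVh, Matrix.mul_assoc]
      rw [hadj2, hb_def, Matrix.mulVec_mulVec]
    rw [hPy, dot_rearrange, hadj, hDg2_def, Complex.ofReal_sum]
    simp only [dotProduct, Matrix.mulVec_diagonal, Pi.star_apply, Complex.star_def]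
    refine Finset.sum_congr rfl fun i _ => ?_
    rw [_root_.map_mul, Complex.conj_ofReal, mul_assoc, ← Complex.normSq_eq_conj_mul_self,
      Complex.ofReal_mul]
  have hble : ∑ i, g i ^ 2 * Complex.normSq (b i) ≤ ∑ i, Complex.normSq (y i) := by
    have h := proj_quad_le P hPh hP2 y
    rw [hbP, Complex.ofReal_re] at h
    exact h
  have hfin : Real.sqrt (∑ i, g i ^ 2 * Complex.normSq (b i)) ≤ en y :=
    Real.sqrt_le_sqrt hble
  have hex : Real.sqrt (∑ i, Complex.normSq (u i)) = en x := by rw [hu2]; rfl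
  refine (habs.trans hCS).trans ?_
  rw [hex]
  exact mul_le_mul_of_nonneg_left hfin (en_nonneg x)


lemma traceNorm_nonneg (M : Matrix (Fin d) (Fin d) ℂ) : 0 ≤ traceNorm M := by
  rw [traceNorm_eq_sum]
  exact Finset.sum_nonneg fun i _ => Real.sqrt_nonneg _

lemma traceNorm_pos {A : Matrix (Fin d) (Fin d) ℂ} (hA : A ≠ 0) : 0 < traceNorm A := by
  rcases lt_or_eq_of_le (traceNorm_nonneg A) with h | h
  · exact h
  exfalso
  apply hA
  set hps := Matrix.posSemidef_conjTranspose_mul_self A with hps_def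
  have hsum : ∑ i, Real.sqrt (hps.1.eigenvalues i) = 0 := by
    rw [← traceNorm_eq_sum, ← h]
  have hzero : ∀ i, hps.1.eigenvalues i = 0 := by
    intro i
    have h0 := (Finset.sum_eq_zero_iff_of_nonneg
      (fun i _ => Real.sqrt_nonneg (hps.1.eigenvalues i))).mp hsum i (Finset.mem_univ i)
    have := hps.eigenvalues_nonneg i
    nlinarith [Real.sq_sqrt this, h0]
  have hAA : Aᴴ * A = 0 := by
    have hsp := hps.1.spectral_theorem
    have hdiag : Matrix.diagonal (RCLike.ofReal ∘ hps.1.eigenvalues : Fin d → ℂ) = 0 := by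
      have : (RCLike.ofReal ∘ hps.1.eigenvalues : Fin d → ℂ) = fun _ => 0 := by
        funext i
        simp [hzero i]
      rw [this, Matrix.diagonal_zero]
    rw [hsp, hdiag, Unitary.conjStarAlgAut_apply, Matrix.mul_zero, Matrix.zero_mul]
  exact Matrix.conjTranspose_mul_self_eq_zero.mp hAA

lemma traceNorm_smul (c : ℂ) (A : Matrix (Fin d) (Fin d) ℂ) :
    traceNorm (c • A) = ‖c‖ * traceNorm A := by
  have key : ∀ M : Matrix (Fin d) (Fin d) ℂ,
      traceNorm M = ((cfc Real.sqrt (Mᴴ * M)).trace).re := by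
    intro M
    rw [(Matrix.posSemidef_conjTranspose_mul_self M).1.cfc_eq, Matrix.IsHermitian.cfc,
      Unitary.conjStarAlgAut_apply]
    rfl
  have hsm : (c • A)ᴴ * (c • A) = (Complex.normSq c) • (Aᴴ * A) := by
    rw [Matrix.conjTranspose_smul, Matrix.smul_mul, Matrix.mul_smul, smul_smul, Complex.star_def,
      ← Complex.normSq_eq_conj_mul_self]
    ext i j
    simp [Complex.real_smul]
  have hf : (fun x => Real.sqrt (Complex.normSq c • x)) = fun x => ‖c‖ * Real.sqrt x := by
    funext x
    rw [smul_eq_mul, Real.sqrt_mul (Complex.normSq_nonneg c), ← Complex.norm_def]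
  rw [key, key, hsm, ← cfc_comp_smul (Complex.normSq c) Real.sqrt (Aᴴ * A)
    (ha := (Matrix.isHermitian_conjTranspose_mul_self A).isSelfAdjoint), hf,
    cfc_const_mul ‖c‖ Real.sqrt (Aᴴ * A), Matrix.trace_smul, Complex.smul_re, smul_eq_mul]

/-- Upper bound: the trace norm of a commutator with a Hermitian matrix whose
eigenvalues lie within distance `h` of some center `c`. -/
lemma comm_traceNorm_le (H₀ : Matrix (Fin d) (Fin d) ℂ) (hH₀ : H₀.IsHermitian)
    (c h : ℝ) (hh : 0 ≤ h) (hbound : ∀ i, |hH₀.eigenvalues i - c| ≤ h)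
    (A : Matrix (Fin d) (Fin d) ℂ) :
    traceNorm (H₀ * A - A * H₀) ≤ 2 * h * traceNorm A := by
  set V : Matrix (Fin d) (Fin d) ℂ := (hH₀.eigenvectorUnitary : Matrix (Fin d) (Fin d) ℂ)
    with hV_def
  have hVV : V * star V = 1 := (Matrix.mem_unitaryGroup_iff).mp hH₀.eigenvectorUnitary.2
  have hVV' : star V * V = 1 := (Matrix.mem_unitaryGroup_iff').mp hH₀.eigenvectorUnitary.2
  have hVh : Vᴴ = star V := (Matrix.star_eq_conjTranspose V).symm
  have hsVh : (star V)ᴴ = V := by rw [← Matrix.star_eq_conjTranspose, star_star]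
  set μ : Fin d → ℝ := fun i => hH₀.eigenvalues i - c with hμ_def
  set H' : Matrix (Fin d) (Fin d) ℂ := H₀ - (c : ℂ) • 1 with hH'_def
  have hcomm : H₀ * A - A * H₀ = H' * A - A * H' := by
    rw [hH'_def, Matrix.sub_mul, Matrix.mul_sub, smul_mul_assoc, mul_smul_comm, one_mul,
      mul_one]
    abel
  have hH'eq : H' = V * Matrix.diagonal (fun i => (μ i : ℂ)) * star V := by
    have h1 : H₀ = V * Matrix.diagonal (RCLike.ofReal ∘ hH₀.eigenvalues) * star V :=
      hH₀.spectral_theorem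
    have h2 : (c : ℂ) • (1 : Matrix (Fin d) (Fin d) ℂ) = V * ((c : ℂ) • 1) * star V := by
      rw [mul_smul_comm, mul_one, smul_mul_assoc, hVV]
    rw [hH'_def, h1, h2, ← Matrix.sub_mul, ← Matrix.mul_sub]
    congr 2
    rw [← Matrix.diagonal_one, ← Matrix.diagonal_smul, Matrix.diagonal_sub]
    congr 1
    funext i
    simp only [Pi.smul_apply, smul_eq_mul, mul_one, Function.comp_apply]
    rw [hμ_def]
    push_cast
    rfl
  have hH'h : H'ᴴ = H' := by
    rw [hH'_def, Matrix.conjTranspose_sub, hH₀.eq, Matrix.conjTranspose_smul,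
      Matrix.conjTranspose_one]
    congr 2
    simp [Complex.conj_ofReal]
  have hHy : ∀ y : Fin d → ℂ, en (H' *ᵥ y) ≤ h * en y := by
    intro y
    set u : Fin d → ℂ := star V *ᵥ y with hu_def
    have h1 : H' *ᵥ y = V *ᵥ (Matrix.diagonal (fun i => (μ i : ℂ)) *ᵥ u) := by
      rw [hu_def, Matrix.mulVec_mulVec, Matrix.mulVec_mulVec, hH'eq, Matrix.mul_assoc]
    have h2 : ∑ i, Complex.normSq ((H' *ᵥ y) i)
        = ∑ i, Complex.normSq ((Matrix.diagonal (fun i => (μ i : ℂ)) *ᵥ u) i) := by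
      rw [h1]
      exact en_mulVec_isometry (by rw [hVh]; exact hVV') _
    have h4 : ∑ i, Complex.normSq (u i) = ∑ i, Complex.normSq (y i) := by
      rw [hu_def]
      exact en_mulVec_isometry (by rw [hsVh]; exact hVV) y
    have h5 : ∑ i, Complex.normSq ((H' *ᵥ y) i) ≤ h ^ 2 * ∑ i, Complex.normSq (y i) := by
      rw [h2, ← h4, Finset.mul_sum]
      refine Finset.sum_le_sum fun i _ => ?_
      rw [Matrix.mulVec_diagonal, Complex.normSq_mul, Complex.normSq_ofReal]
      have hmb : |μ i| ≤ h := hbound i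
      have hsq2 : μ i * μ i ≤ h ^ 2 := by nlinarith [sq_abs (μ i), abs_nonneg (μ i)]
      nlinarith [Complex.normSq_nonneg (u i)]
    calc en (H' *ᵥ y) = Real.sqrt (∑ i, Complex.normSq ((H' *ᵥ y) i)) := rfl
      _ ≤ Real.sqrt (h ^ 2 * ∑ i, Complex.normSq (y i)) := Real.sqrt_le_sqrt h5
      _ = h * en y := by rw [Real.sqrt_mul (sq_nonneg h), Real.sqrt_sq hh]; rfl
  obtain ⟨C, hC, hCtr⟩ := exists_dual (H' * A - A * H')
  have htr2 : ((C * (H' * A - A * H')).trace).re = (((C * H' - H' * C) * A).trace).re := by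
    have e1 : (C * (H' * A - A * H')).trace
        = ((C * H') * A).trace - ((H' * C) * A).trace := by
      rw [Matrix.mul_sub, Matrix.trace_sub, ← Matrix.mul_assoc]
      congr 1
      rw [← Matrix.mul_assoc, Matrix.trace_mul_comm, ← Matrix.mul_assoc]
    have e2 : ((C * H' - H' * C) * A).trace
        = ((C * H') * A).trace - ((H' * C) * A).trace := by
      rw [Matrix.sub_mul, Matrix.trace_sub]
    rw [e1, e2]
  have hC2 : ∀ x y : Fin d → ℂ,
      ‖star x ⬝ᵥ ((C * H' - H' * C) *ᵥ y)‖ ≤ (2 * h) * (en x * en y) := by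
    intro x y
    rw [Matrix.sub_mulVec, dotProduct_sub]
    have t1 : ‖star x ⬝ᵥ ((C * H') *ᵥ y)‖ ≤ h * (en x * en y) := by
      rw [← Matrix.mulVec_mulVec]
      refine (hC x (H' *ᵥ y)).trans ?_
      nlinarith [en_nonneg x, en_nonneg y, hHy y, en_nonneg (H' *ᵥ y)]
    have t2 : ‖star x ⬝ᵥ ((H' * C) *ᵥ y)‖ ≤ h * (en x * en y) := by
      rw [← Matrix.mulVec_mulVec, dot_rearrange, hH'h]
      refine (hC (H' *ᵥ x) y).trans ?_
      nlinarith [en_nonneg x, en_nonneg y, hHy x, en_nonneg (H' *ᵥ x)]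
    have habs : ‖star x ⬝ᵥ ((C * H') *ᵥ y) - star x ⬝ᵥ ((H' * C) *ᵥ y)‖
        ≤ ‖star x ⬝ᵥ ((C * H') *ᵥ y)‖ + ‖star x ⬝ᵥ ((H' * C) *ᵥ y)‖ := by
      have := norm_sub_le (star x ⬝ᵥ ((C * H') *ᵥ y)) (star x ⬝ᵥ ((H' * C) *ᵥ y))
      simpa using this
    linarith
  rw [hcomm, ← hCtr, htr2]
  have := re_trace_le A (C * H' - H' * C) (2 * h) hC2
  linarith

/-- Attainment: a rank-one `A` built from extreme eigenvectors is an eigenvector of the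
commutator superoperator. -/
lemma comm_rank_one (H₀ : Matrix (Fin d) (Fin d) ℂ) (hH₀ : H₀.IsHermitian) (i₀ i₁ : Fin d) :
    ∃ A : Matrix (Fin d) (Fin d) ℂ, A ≠ 0 ∧
      H₀ * A - A * H₀ = ((hH₀.eigenvalues i₀ - hH₀.eigenvalues i₁ : ℝ) : ℂ) • A := by
  set V : Matrix (Fin d) (Fin d) ℂ := (hH₀.eigenvectorUnitary : Matrix (Fin d) (Fin d) ℂ)
    with hV_def
  have hVV' : star V * V = 1 := (Matrix.mem_unitaryGroup_iff').mp hH₀.eigenvectorUnitary.2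
  set v : Fin d → ℂ := fun k => V k i₀ with hv_def
  set w : Fin d → ℂ := fun k => V k i₁ with hw_def
  have hv_eq : v = ⇑(hH₀.eigenvectorBasis i₀) :=
    funext fun k => hH₀.eigenvectorUnitary_apply k i₀
  have hw_eq : w = ⇑(hH₀.eigenvectorBasis i₁) :=
    funext fun k => hH₀.eigenvectorUnitary_apply k i₁
  have hv : H₀ *ᵥ v = hH₀.eigenvalues i₀ • v := by
    rw [hv_eq]; exact hH₀.mulVec_eigenvectorBasis i₀
  have hw : H₀ *ᵥ w = hH₀.eigenvalues i₁ • w := by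
    rw [hw_eq]; exact hH₀.mulVec_eigenvectorBasis i₁
  have hdotv : star v ⬝ᵥ v = 1 := by
    have := congrFun (congrFun hVV' i₀) i₀
    simpa [Matrix.mul_apply, Matrix.one_apply, dotProduct, Matrix.star_apply,
      Pi.star_apply] using this
  have hdotw : star w ⬝ᵥ w = 1 := by
    have := congrFun (congrFun hVV' i₁) i₁
    simpa [Matrix.mul_apply, Matrix.one_apply, dotProduct, Matrix.star_apply,
      Pi.star_apply] using this
  have hv0 : v ≠ 0 := by
    intro h
    rw [h] at hdotv
    simp [dotProduct] at hdotv
  have hw0 : w ≠ 0 := by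
    intro h
    rw [h] at hdotw
    simp [dotProduct] at hdotw
  obtain ⟨iv, hiv⟩ := Function.ne_iff.mp hv0
  obtain ⟨iw, hiw⟩ := Function.ne_iff.mp hw0
  set A : Matrix (Fin d) (Fin d) ℂ := Matrix.vecMulVec v (star w) with hA_def
  have hAne : A ≠ 0 := by
    intro h
    have := congrFun (congrFun h iv) iw
    rw [hA_def] at this
    simp only [Matrix.vecMulVec_apply, Pi.star_apply, Matrix.zero_apply] at this
    rcases mul_eq_zero.mp this with h1 | h1
    · exact hiv h1
    · exact hiw (by simpa using congrArg star h1)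
  refine ⟨A, hAne, ?_⟩
  have hHA : H₀ * A = ((hH₀.eigenvalues i₀ : ℝ) : ℂ) • A := by
    ext i j
    rw [Matrix.mul_apply]
    simp only [hA_def, Matrix.vecMulVec_apply, Pi.star_apply, Matrix.smul_apply]
    have hsum : ∑ k, H₀ i k * (v k * star (w j)) = (∑ k, H₀ i k * v k) * star (w j) := by
      rw [Finset.sum_mul]
      exact Finset.sum_congr rfl fun k _ => by ring
    rw [hsum, show (∑ k, H₀ i k * v k) = (H₀ *ᵥ v) i from rfl, hv]
    simp only [Pi.smul_apply, Complex.real_smul, smul_eq_mul]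
    ring
  have hwH : star w ᵥ* H₀ = fun j => ((hH₀.eigenvalues i₁ : ℝ) : ℂ) * star (w j) := by
    have h1 : star w ᵥ* H₀ = star (H₀ *ᵥ w) := by
      conv_lhs => rw [← hH₀.eq]
      exact (Matrix.star_mulVec H₀ w).symm
    rw [h1, hw]
    funext j
    simp only [Pi.star_apply, Pi.smul_apply, Complex.real_smul, smul_eq_mul]
    rw [star_mul']
    simp [Complex.conj_ofReal]
  have hAH : A * H₀ = ((hH₀.eigenvalues i₁ : ℝ) : ℂ) • A := by
    ext i j
    rw [Matrix.mul_apply]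
    simp only [hA_def, Matrix.vecMulVec_apply, Pi.star_apply, Matrix.smul_apply]
    have hsum : ∑ k, v i * star (w k) * H₀ k j = v i * ∑ k, star (w k) * H₀ k j := by
      rw [Finset.mul_sum]
      exact Finset.sum_congr rfl fun k _ => by ring
    rw [hsum, show (∑ k, star (w k) * H₀ k j) = (star w ᵥ* H₀) j from rfl, hwH]
    simp only [smul_eq_mul]
    ring
  rw [hHA, hAH, ← sub_smul]
  congr 1
  push_cast
  ring

end CommNorm

/-- Appendix C of the paper: for a Hermitian matrix `H₀` with
largest eigenvalue `E_max` and smallest eigenvalue `E_min`, the induced 1-norm of the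
commutator superoperator `L(A) = −i(H₀A − AH₀)` equals the spectral diameter:
`sup_{A ≠ 0} ‖L(A)‖₁ / ‖A‖₁ = E_max − E_min`. -/
theorem commutator_one_norm (d : ℕ) (hd : 1 ≤ d)
    (H₀ : Matrix (Fin d) (Fin d) ℂ) (hH₀ : H₀.IsHermitian) :
    sSup {r : ℝ | ∃ A : Matrix (Fin d) (Fin d) ℂ, A ≠ 0 ∧
        r = traceNorm ((-Complex.I) • (H₀ * A - A * H₀)) / traceNorm A}
      = (⨆ i, hH₀.eigenvalues i) - (⨅ i, hH₀.eigenvalues i) := by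
  haveI : Nonempty (Fin d) := ⟨⟨0, hd⟩⟩
  obtain ⟨i₀, hi₀⟩ := Finite.exists_max hH₀.eigenvalues
  obtain ⟨i₁, hi₁⟩ := Finite.exists_min hH₀.eigenvalues
  have hEmax : (⨆ i, hH₀.eigenvalues i) = hH₀.eigenvalues i₀ :=
    le_antisymm (ciSup_le hi₀) (le_ciSup (Set.Finite.bddAbove (Set.finite_range _)) i₀)
  have hEmin : (⨅ i, hH₀.eigenvalues i) = hH₀.eigenvalues i₁ :=
    le_antisymm (ciInf_le (Set.Finite.bddBelow (Set.finite_range _)) i₁) (le_ciInf hi₁)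
  rw [hEmax, hEmin]
  set Emax := hH₀.eigenvalues i₀ with hEmax_def
  set Emin := hH₀.eigenvalues i₁ with hEmin_def
  have hEE : Emin ≤ Emax := hi₀ i₁
  have hsmulI : ∀ X : Matrix (Fin d) (Fin d) ℂ,
      traceNorm ((-Complex.I) • X) = traceNorm X := by
    intro X
    rw [CommNorm.traceNorm_smul]
    simp
  have hmem : (Emax - Emin) ∈ {r : ℝ | ∃ A : Matrix (Fin d) (Fin d) ℂ, A ≠ 0 ∧
      r = traceNorm ((-Complex.I) • (H₀ * A - A * H₀)) / traceNorm A} := by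
    obtain ⟨A₀, hA₀ne, hA₀⟩ := CommNorm.comm_rank_one H₀ hH₀ i₀ i₁
    refine ⟨A₀, hA₀ne, ?_⟩
    have : traceNorm ((-Complex.I) • (H₀ * A₀ - A₀ * H₀)) / traceNorm A₀ = Emax - Emin := by
      rw [hsmulI, hA₀, CommNorm.traceNorm_smul, Complex.norm_real, Real.norm_eq_abs,
        abs_of_nonneg (by linarith : (0:ℝ) ≤ Emax - Emin), mul_div_assoc,
        div_self (ne_of_gt (CommNorm.traceNorm_pos hA₀ne)), mul_one]
    exact this.symm
  have hub : ∀ r ∈ {r : ℝ | ∃ A : Matrix (Fin d) (Fin d) ℂ, A ≠ 0 ∧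
      r = traceNorm ((-Complex.I) • (H₀ * A - A * H₀)) / traceNorm A},
      r ≤ Emax - Emin := by
    rintro r ⟨A, hAne, rfl⟩
    have hh : (0:ℝ) ≤ (Emax - Emin)/2 := by linarith
    have hbound : ∀ i, |hH₀.eigenvalues i - (Emax + Emin)/2| ≤ (Emax - Emin)/2 := by
      intro i
      rw [abs_le]
      have h1 := hi₁ i
      have h2 := hi₀ i
      constructor
      · linarith
      · linarith
    have hcle := CommNorm.comm_traceNorm_le H₀ hH₀ ((Emax + Emin)/2) ((Emax - Emin)/2) hh
      hbound A
    rw [hsmulI, div_le_iff₀ (CommNorm.traceNorm_pos hAne)]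
    linarith
  exact le_antisymm (csSup_le ⟨_, hmem⟩ hub) (le_csSup ⟨Emax - Emin, hub⟩ hmem)
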